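/- Let n ≥ 2, k̃(x) = 2^{-n}ω_n^{-1}·χ_{{|x|≤2}}(x), and A = B̄₂(0)\B₁(0). Then for every x ≠ 0, ∫_A k̃(x-y) dy < ∫_A k̃(-y) dy = (1 - 2^{-n}), i.e. the kernel mass captured from the annulus is strictly maximized at the center x = 0. -/

import Mathlib

open MeasureTheory

/-- The kernel mass captured from the annulus `A = B̄₂ \ B₁` is strictly
maximized at the center: `∫_A k̃(x-y) dy < ∫_A k̃(-y) dy = 1 - 2^{-n}` for
all `x ≠ 0`. -/
theorem stmt_19 (n : ℕ) (hn : 2 ≤ n)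
    (ωn : ℝ)
    (hωn : ωn = (volume (Metric.ball (0 : EuclideanSpace ℝ (Fin n)) 1)).toReal)
    (ktil : EuclideanSpace ℝ (Fin n) → ℝ)
    (hktil : ∀ x, ktil x = if ‖x‖ ≤ 2 then ((2:ℝ) ^ n)⁻¹ * ωn⁻¹ else 0)
    (A : Set (EuclideanSpace ℝ (Fin n)))
    (hA : A = Metric.closedBall (0 : EuclideanSpace ℝ (Fin n)) 2 \
      Metric.ball 0 1) :
    (∫ y in A, ktil (-y)) = 1 - ((2:ℝ) ^ n)⁻¹ ∧
    ∀ x : EuclideanSpace ℝ (Fin n), x ≠ 0 →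
      (∫ y in A, ktil (x - y)) < ∫ y in A, ktil (-y) := by
  haveI : Nonempty (Fin n) := ⟨⟨0, by omega⟩⟩
  have hdim : Module.finrank ℝ (EuclideanSpace ℝ (Fin n)) = n := finrank_euclideanSpace_fin
  set c : ℝ := ((2:ℝ) ^ n)⁻¹ * ωn⁻¹ with hc
  set μb : ENNReal := volume (Metric.ball (0 : EuclideanSpace ℝ (Fin n)) 1) with hμb
  have hμb_pos : 0 < μb := Metric.measure_ball_pos _ _ one_pos
  have hμb_top : μb ≠ ⊤ := measure_ball_lt_top.ne
  have hωn_pos : 0 < ωn := by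
    rw [hωn]; exact ENNReal.toReal_pos hμb_pos.ne' hμb_top
  have hc_pos : 0 < c := by positivity
  have hAmeas : MeasurableSet A := by
    rw [hA]; exact measurableSet_closedBall.diff measurableSet_ball
  -- volume of A
  have hvol2 : volume (Metric.closedBall (0 : EuclideanSpace ℝ (Fin n)) 2) = ENNReal.ofReal (2 ^ n) * μb := by
    rw [Measure.addHaar_closedBall _ _ (by norm_num : (0:ℝ) ≤ 2), hdim]
  have hvol1 : volume (Metric.ball (0 : EuclideanSpace ℝ (Fin n)) 1) = μb := rfl
  have hvolA : volume A = (ENNReal.ofReal (2 ^ n) - 1) * μb := by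
    rw [hA, measure_diff (Metric.ball_subset_closedBall.trans
        (Metric.closedBall_subset_closedBall (by norm_num)))
        measurableSet_ball.nullMeasurableSet measure_ball_lt_top.ne,
      hvol2, hvol1, ENNReal.sub_mul (fun _ _ => hμb_top), one_mul]
  have hvolA_top : volume A ≠ ⊤ := by
    rw [hvolA]
    exact ENNReal.mul_ne_top (by simp) hμb_top
  have hvolA_toReal : (volume A).toReal = (2 ^ n - 1) * ωn := by
    rw [hvolA, ENNReal.toReal_mul, ← hωn]
    congr 1
    have h2n : (1:ℝ) ≤ 2 ^ n := one_le_pow₀ (by norm_num)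
    rw [show (1:ENNReal) = ENNReal.ofReal 1 by simp, ← ENNReal.ofReal_sub _ (by norm_num),
      ENNReal.toReal_ofReal (by linarith)]
  -- the first integral
  have key : ∀ y ∈ A, ktil (-y) = c := by
    intro y hy
    rw [hA] at hy
    have : ‖y‖ ≤ 2 := mem_closedBall_zero_iff.mp hy.1
    rw [hktil, if_pos (by simpa using this)]
  have h1 : (∫ y in A, ktil (-y)) = 1 - ((2:ℝ) ^ n)⁻¹ := by
    rw [setIntegral_congr_fun hAmeas key, setIntegral_const, Measure.real, hvolA_toReal, smul_eq_mul, hc]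
    field_simp
  refine ⟨h1, fun x hx => ?_⟩
  rw [h1]
  -- second integral as measure of intersection
  set C := Metric.closedBall x 2 with hC
  have hCmeas : MeasurableSet C := measurableSet_closedBall
  have hfun : ∀ y, ktil (x - y) = Set.indicator C (fun _ => c) y := by
    intro y
    rw [hktil]
    by_cases h : y ∈ C
    · rw [Set.indicator_of_mem h, if_pos]
      have := Metric.mem_closedBall.mp h
      rwa [(neg_sub y x).symm, norm_neg, ← dist_eq_norm]
    · rw [Set.indicator_of_notMem h, if_neg]
      intro hle
      refine h (Metric.mem_closedBall.mpr ?_)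
      rw [dist_eq_norm, ← norm_neg, neg_sub]
      exact hle
  have h2 : (∫ y in A, ktil (x - y)) = c * (volume (A ∩ C)).toReal := by
    simp_rw [hfun]
    rw [setIntegral_indicator hCmeas, setIntegral_const, smul_eq_mul, mul_comm, Measure.real]
  rw [h2]
  -- find a small ball in A \ C
  have hxpos : 0 < ‖x‖ := norm_pos_iff.mpr hx
  set ε : ℝ := min (‖x‖ / 2) (1 / 2) with hε
  have hε_pos : 0 < ε := lt_min (by positivity) (by norm_num)
  have hε_le1 : ε ≤ 1 / 2 := min_le_right _ _
  have hε_lex : ε ≤ ‖x‖ / 2 := min_le_left _ _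
  set z : EuclideanSpace ℝ (Fin n) := (-(2 - ε) * ‖x‖⁻¹) • x with hz
  have hznorm : ‖z‖ = 2 - ε := by
    rw [hz, norm_smul, norm_mul, norm_neg, norm_inv, norm_norm, Real.norm_eq_abs,
      abs_of_nonneg (by linarith), mul_assoc, inv_mul_cancel₀ hxpos.ne', mul_one]
  have hxz : ‖x - z‖ = ‖x‖ + (2 - ε) := by
    have : x - z = (1 + (2 - ε) * ‖x‖⁻¹) • x := by
      rw [hz]; module
    rw [this, norm_smul, Real.norm_eq_abs, abs_of_nonneg (by have : (0:ℝ) ≤ (2 - ε) * ‖x‖⁻¹ := mul_nonneg (by linarith) (by positivity); linarith), add_mul, one_mul,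
      mul_assoc, inv_mul_cancel₀ hxpos.ne', mul_one]
  have hball : Metric.ball z (ε / 2) ⊆ A \ C := by
    intro y hy
    have hdy : ‖y - z‖ < ε / 2 := by
      rw [← dist_eq_norm]; exact Metric.mem_ball.mp hy
    constructor
    · rw [hA]
      constructor
      · rw [Metric.mem_closedBall, dist_zero_right]
        calc ‖y‖ ≤ ‖z‖ + ‖y - z‖ := by
              simpa using norm_add_le z (y - z)
          _ ≤ (2 - ε) + ε / 2 := by rw [hznorm]; linarith
          _ ≤ 2 := by linarith
      · rw [Metric.mem_ball, dist_zero_right]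
        push_neg
        calc (1:ℝ) ≤ (2 - ε) - ε / 2 := by linarith
          _ ≤ ‖z‖ - ‖y - z‖ := by rw [hznorm]; linarith
          _ ≤ ‖y‖ := by
              have := norm_sub_norm_le z y
              rw [(neg_sub y z).symm, norm_neg] at this
              linarith
    · rw [hC, Metric.mem_closedBall, dist_comm, dist_eq_norm]
      push_neg
      calc (2:ℝ) < ‖x‖ + (2 - ε) - ε / 2 := by linarith
        _ ≤ ‖x - z‖ - ‖y - z‖ := by rw [hxz]; linarith
        _ ≤ ‖x - y‖ := by
            have := norm_sub_le_norm_sub_add_norm_sub x y z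
            linarith
  have hdiff_pos : 0 < volume (A \ C) :=
    lt_of_lt_of_le (Metric.measure_ball_pos _ _ (by positivity : (0:ℝ) < ε/2)) (measure_mono hball)
  have hlt : volume (A ∩ C) < volume A := by
    have hsplit : volume (A ∩ C) + volume (A \ C) = volume A :=
      measure_inter_add_diff A hCmeas
    have hAC_top : volume (A ∩ C) ≠ ⊤ :=
      (lt_of_le_of_lt (measure_mono Set.inter_subset_left) hvolA_top.lt_top).ne
    calc volume (A ∩ C) < volume (A ∩ C) + volume (A \ C) :=
          ENNReal.lt_add_right hAC_top hdiff_pos.ne'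
      _ = volume A := hsplit
  have := ENNReal.toReal_strict_mono hvolA_top hlt
  calc c * (volume (A ∩ C)).toReal < c * (volume A).toReal := by
        exact mul_lt_mul_of_pos_left this hc_pos
    _ = 1 - ((2:ℝ) ^ n)⁻¹ := by
        rw [hvolA_toReal, hc]; field_simp
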